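/- Let m ≥ 1, n ≥ 2 and let (a,u), (b,v) ∈ G = ℤ^m × F_n. There exists an injective endomorphism Ψ of G with Ψ(a,u) = (b,v) if and only if both of the following hold: (1) there exists an injective endomorphism φ of F_n with φ(u) = v, and (2) there exist an m×m integer matrix Q with det(Q) ≠ 0 and an n×m integer matrix P with aQ + ūP = b. -/

import Mathlib

open Matrix

/-- The abelianization vector (vector of exponent sums of the generators)
of an element of the free group `F_n`. -/
def abVec {n : ℕ} (u : FreeGroup (Fin n)) : Fin n → ℤ :=
  Multiplicative.toAdd ((FreeGroup.lift fun i => Multiplicative.ofAdd (Pi.single i (1 : ℤ))) u)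

/-- The free-abelian times free group `G = ℤ^m × F_n`. -/
abbrev GFab (m n : ℕ) := Multiplicative (Fin m → ℤ) × FreeGroup (Fin n)


namespace FreeGroup
variable {α : Type*} [DecidableEq α]

lemma reduce_cons_self {x : α × Bool} {L : List (α × Bool)}
    (h : reduce (x :: L) = x :: L) : reduce L = L := by
  rw [reduce.cons] at h
  rcases hL : reduce L with _ | ⟨hd, tl⟩
  · rw [hL] at h; simp at h; simp [h]
  · rw [hL] at h
    dsimp at h
    split_ifs at h with hc
    · exfalso
      have h1 : tl.length ≤ L.length := by
        have := (reduce.red (L := L)).length_le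
        rw [hL] at this; simpa using Nat.le_of_succ_le this
      have : (x :: L).length = tl.length := by rw [h]
      simp at this; omega
    · simpa using h

lemma reduce_cons_of_head {x : α × Bool} {L : List (α × Bool)}
    (hL : reduce L = L) (hx : ∀ y ∈ L.head?, ¬(x.1 = y.1 ∧ x.2 = !y.2)) :
    reduce (x :: L) = x :: L := by
  rw [reduce.cons, hL]
  cases L with
  | nil => rfl
  | cons hd tl =>
    dsimp
    rw [if_neg]
    exact hx hd rfl

theorem exists_zpow_of_commute_of_aux (i : α) :
    ∀ (N : ℕ) (w : FreeGroup α), (toWord w).length ≤ N → Commute w (of i) →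
      ∃ k : ℤ, w = of i ^ k := by
  intro N
  induction N with
  | zero =>
    intro w hw _
    refine ⟨0, ?_⟩
    rw [_root_.zpow_zero]
    exact toWord_eq_nil_iff.mp (List.length_eq_zero_iff.mp (Nat.le_zero.mp hw))
  | succ N ih =>
    intro w hw hcomm
    rcases hL : toWord w with _ | ⟨⟨j, c⟩, L'⟩
    · exact ⟨0, by rw [_root_.zpow_zero]; exact toWord_eq_nil_iff.mp hL⟩
    have hred : reduce ((j, c) :: L') = (j, c) :: L' := by
      rw [← hL]; exact reduce_toWord w
    have hwlen : L'.length + 1 ≤ N + 1 := by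
      rw [hL] at hw; simpa using hw
    have hmkof : ∀ (a : α) (b : Bool), mk [(a, b)] = of a ^ (if b then (1:ℤ) else -1) := by
      intro a b
      cases b
      · simp only [if_neg Bool.false_ne_true]
        rw [_root_.zpow_neg, _root_.zpow_one]
        rfl
      · simp only [if_pos rfl, _root_.zpow_one]; rfl
    by_cases hji : j = i
    · subst hji
      have hw' : w = mk [(j, c)] * mk L' := by
        rw [mul_mk, List.singleton_append, ← hL, mk_toWord]
      have hL' : toWord (mk L') = L' := by
        rw [toWord_mk]; exact reduce_cons_self hred
      have hcomm' : Commute (mk L') (of j) := by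
        have h1 : Commute (of j ^ (if c then (1:ℤ) else -1)) (of j) :=
          (Commute.refl (of j)).zpow_left _
        have h2 : mk L' = (mk [(j, c)])⁻¹ * w := by rw [hw']; group
        rw [h2, hmkof]
        exact h1.inv_left.mul_left hcomm
      obtain ⟨k, hk⟩ := ih (mk L') (by rw [hL']; omega) hcomm'
      refine ⟨(if c then (1:ℤ) else -1) + k, ?_⟩
      rw [hw', hmkof, hk, _root_.zpow_add]
    · -- j ≠ i : inspect the last letter via the inverse word
      have hMw : toWord w⁻¹ = invRev ((j, c) :: L') := by rw [toWord_inv, hL]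
      have hMred : reduce (invRev ((j, c) :: L')) = invRev ((j, c) :: L') := by
        rw [← hMw]; exact reduce_toWord w⁻¹
      rcases hM : invRev ((j, c) :: L') with _ | ⟨⟨l, d⟩, M'⟩
      · exfalso
        have := invRev_length (L₁ := (j, c) :: L')
        rw [hM] at this; simp at this
      by_cases hli : l = i
      · subst hli
        have hw' : w⁻¹ = mk [(l, d)] * mk M' := by
          rw [mul_mk, List.singleton_append, ← hM, ← hMw, mk_toWord]
        have hM' : toWord (mk M') = M' := by
          rw [toWord_mk]
          exact reduce_cons_self (hM ▸ hMred)
        have hlen' : (toWord (mk M')).length ≤ N := by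
          rw [hM']
          have := invRev_length (L₁ := (j, c) :: L')
          rw [hM] at this; simp at this; omega
        have hcomm' : Commute (mk M') (of l) := by
          have h1 : Commute (of l ^ (if d then (1:ℤ) else -1)) (of l) :=
            (Commute.refl (of l)).zpow_left _
          have h2 : mk M' = (mk [(l, d)])⁻¹ * w⁻¹ := by rw [hw']; group
          rw [h2, hmkof]
          exact h1.inv_left.mul_left hcomm.inv_left
        obtain ⟨k, hk⟩ := ih (mk M') hlen' hcomm'
        refine ⟨-((if d then (1:ℤ) else -1) + k), ?_⟩
        have : w⁻¹ = of l ^ ((if d then (1:ℤ) else -1) + k) := by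
          rw [hw', hmkof, hk, _root_.zpow_add]
        rw [← inv_inv w, this, ← _root_.zpow_neg]
      · exfalso
        have hA : toWord (of i * w) = (i, true) :: (j, c) :: L' := by
          have : of i * w = mk ((i, true) :: (j, c) :: L') := by
            have : of i * w = mk [(i, true)] * mk ((j, c) :: L') := by
              rw [← hL, mk_toWord]; rfl
            rw [this, mul_mk, List.singleton_append]
          rw [this, toWord_mk]
          refine reduce_cons_of_head hred ?_
          intro y hy
          simp at hy
          rw [← hy]
          rintro ⟨h1, -⟩
          exact hji h1.symm
        have hB : toWord ((of i)⁻¹ * w⁻¹) = (i, false) :: (l, d) :: M' := by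
          have h0 : (of i)⁻¹ * w⁻¹ = mk [(i, false)] * mk ((l, d) :: M') := by
            have e1 : ((of i)⁻¹ : FreeGroup α) = mk [(i, false)] := by
              rw [show (of i : FreeGroup α) = mk [(i, true)] from rfl, inv_mk]
              rfl
            rw [e1, ← hM, ← hMw, mk_toWord]
          rw [h0, mul_mk, List.singleton_append, toWord_mk]
          refine reduce_cons_of_head (hM ▸ hMred) ?_
          intro y hy
          simp at hy
          rw [← hy]
          rintro ⟨h1, -⟩
          exact hli h1.symm
        have hBA : (of i)⁻¹ * w⁻¹ = (of i * w)⁻¹ := by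
          rw [_root_.mul_inv_rev]
          exact (hcomm.inv_inv.eq).symm
        have h1 := hB
        rw [hBA, toWord_inv, hA, invRev_cons, hM] at h1
        have h2 := congrArg List.head? h1
        simp at h2
        exact hli h2.1

theorem exists_zpow_of_commute_of {i : α} {w : FreeGroup α} (h : Commute w (of i)) :
    ∃ k : ℤ, w = of i ^ k :=
  exists_zpow_of_commute_of_aux i (toWord w).length w le_rfl h


lemma eq_one_of_central [DecidableEq α] {z : FreeGroup α} (hz : ∀ x, Commute z x)
    {i j : α} (hij : i ≠ j) : z = 1 := by
  obtain ⟨k, hk⟩ := exists_zpow_of_commute_of (hz (of i))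
  obtain ⟨l, hl⟩ := exists_zpow_of_commute_of (hz (of j))
  set E := FreeGroup.lift
    (fun a : α => if a = i then Multiplicative.ofAdd (1 : ℤ) else 1) with hE
  have h1 : E z = Multiplicative.ofAdd (k : ℤ) := by
    rw [hk, _root_.map_zpow]
    rw [show E (of i) = Multiplicative.ofAdd (1 : ℤ) by rw [hE, lift_apply_of, if_pos rfl]]
    rw [← ofAdd_zsmul, smul_eq_mul, mul_one]
  have h2 : E z = 1 := by
    rw [hl, _root_.map_zpow]
    rw [show E (of j) = 1 by rw [hE, lift_apply_of, if_neg (Ne.symm hij)]]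
    rw [_root_.one_zpow]
  have hk0 : k = 0 := by
    have := h1.symm.trans h2
    simpa using this
  rw [hk, hk0, _root_.zpow_zero]

lemma commute_all_of_subsingleton [Subsingleton α] (x y : FreeGroup α) : Commute x y := by
  rcases isEmpty_or_nonempty α with h | ⟨⟨g0⟩⟩
  · have hall : ∀ z : FreeGroup α, z = 1 := by
      intro z
      induction z with
      | C1 => rfl
      | of x => exact h.elim x
      | inv_of x hx => rw [hx, inv_one]
      | mul x y hx hy => rw [hx, hy, one_mul]
    rw [hall x, hall y]
  · have hall : ∀ z : FreeGroup α, z ∈ Subgroup.zpowers (of g0) := by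
      intro z
      induction z with
      | C1 => exact Subgroup.one_mem _
      | of x => rw [Subsingleton.elim x g0]; exact Subgroup.mem_zpowers _
      | inv_of x hx => exact Subgroup.inv_mem _ hx
      | mul x y hx hy => exact Subgroup.mul_mem _ hx hy
    obtain ⟨k, hk⟩ := hall x
    obtain ⟨l, hl⟩ := hall y
    rw [← hk, ← hl]
    exact Commute.zpow_zpow (Commute.refl _) _ _
end FreeGroup


theorem isFreeGroup_comm_of_central {G : Type*} [Group G] [IsFreeGroup G] {c : G}
    (hc : c ≠ 1) (hcen : ∀ x, Commute c x) : ∀ a b : G, Commute a b := by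
  classical
  set β := IsFreeGroup.Generators G with hβ
  let e : G ≃* FreeGroup β := IsFreeGroup.toFreeGroup G
  by_cases hsub : ∀ i j : β, i = j
  · intro a b
    have : Subsingleton β := ⟨hsub⟩
    have h := FreeGroup.commute_all_of_subsingleton (e a) (e b)
    have := congrArg e.symm h.eq
    simpa [_root_.map_mul, commute_iff_eq] using this
  · push_neg at hsub
    obtain ⟨i, j, hij⟩ := hsub
    exfalso
    apply hc
    have hcent : ∀ y : FreeGroup β, Commute (e c) y := by
      intro y
      have := hcen (e.symm y)
      have h2 := congrArg e this.eq
      simpa [_root_.map_mul, commute_iff_eq] using h2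
    have h1 : e c = 1 := FreeGroup.eq_one_of_central hcent hij
    have := congrArg e.symm h1
    simpa using this

theorem freeGroup_commute_of_commute {α : Type*} {c a b : FreeGroup α}
    (hc : c ≠ 1) (ha : Commute c a) (hb : Commute c b) : Commute a b := by
  classical
  set H := Subgroup.centralizer ({c} : Set (FreeGroup α)) with hH
  have hcH : c ∈ H := Subgroup.mem_centralizer_iff.mpr (by rintro g rfl; rfl)
  have haH : a ∈ H := Subgroup.mem_centralizer_iff.mpr (by rintro g rfl; exact ha.eq)
  have hbH : b ∈ H := Subgroup.mem_centralizer_iff.mpr (by rintro g rfl; exact hb.eq)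
  have hcen : ∀ x : H, Commute (⟨c, hcH⟩ : H) x := by
    rintro ⟨x, hx⟩
    have := Subgroup.mem_centralizer_iff.mp hx c rfl
    exact Subtype.ext this
  have hres := isFreeGroup_comm_of_central (c := (⟨c, hcH⟩ : H))
    (fun h => hc (congrArg Subtype.val h)) hcen ⟨a, haH⟩ ⟨b, hbH⟩
  exact congrArg Subtype.val hres.eq

namespace FreeGroup
lemma of_mul_of_ne {α : Type*} [DecidableEq α] {i j : α} (h : i ≠ j) :
    FreeGroup.of i * FreeGroup.of j ≠ FreeGroup.of j * FreeGroup.of i := by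
  intro hEq
  have hred : ∀ a b : α, reduce [(a, true), (b, true)] = [(a, true), (b, true)] := by
    intro a b
    rw [reduce.cons, reduce_singleton]
    simp
  have h1 : toWord (FreeGroup.of i * FreeGroup.of j) = [(i, true), (j, true)] := by
    rw [show (FreeGroup.of i * FreeGroup.of j : FreeGroup α) = mk [(i, true), (j, true)] from
      mul_mk, toWord_mk, hred]
  have h2 : toWord (FreeGroup.of j * FreeGroup.of i) = [(j, true), (i, true)] := by
    rw [show (FreeGroup.of j * FreeGroup.of i : FreeGroup α) = mk [(j, true), (i, true)] from
      mul_mk, toWord_mk, hred]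
  rw [hEq, h2] at h1
  exact h (by injection h1 with h3 _; injection h3 with h4 _; exact h4.symm)
end FreeGroup

lemma abVec_one {n : ℕ} : abVec (1 : FreeGroup (Fin n)) = 0 := by
  simp [abVec]

lemma abVec_mul {n : ℕ} (u v : FreeGroup (Fin n)) : abVec (u * v) = abVec u + abVec v := by
  simp [abVec, _root_.map_mul, toAdd_mul]

lemma abVec_of {n : ℕ} (i : Fin n) : abVec (FreeGroup.of i) = Pi.single i 1 := by
  simp [abVec, FreeGroup.lift_apply_of]

lemma abVec_zpow {n : ℕ} (u : FreeGroup (Fin n)) (k : ℤ) : abVec (u ^ k) = k • abVec u := by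
  simp [abVec, _root_.map_zpow, toAdd_zpow]

/-- Whitehead problem characterization for monomorphisms of `ℤ^m × F_n` (m ≥ 1, n ≥ 2):
some injective endomorphism sends `(a,u)` to `(b,v)` iff some injective endomorphism of
`F_n` sends u to v and there exist Q with `det Q ≠ 0` and P with `aQ + ūP = b`. -/
theorem whitehead_mono (m n : ℕ) (hm : 1 ≤ m) (hn : 2 ≤ n)
    (a b : Fin m → ℤ) (u v : FreeGroup (Fin n)) :
    (∃ Ψ : GFab m n →* GFab m n, Function.Injective Ψ ∧
        Ψ (Multiplicative.ofAdd a, u) = (Multiplicative.ofAdd b, v)) ↔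
    ((∃ φ : FreeGroup (Fin n) →* FreeGroup (Fin n), Function.Injective φ ∧ φ u = v) ∧
     (∃ (Q : Matrix (Fin m) (Fin m) ℤ) (P : Matrix (Fin n) (Fin m) ℤ),
        Q.det ≠ 0 ∧ a ᵥ* Q + abVec u ᵥ* P = b)) := by
  constructor
  · rintro ⟨Ψ, hinj, hval⟩
    set i0 : Fin n := ⟨0, by omega⟩ with hi0
    set i1 : Fin n := ⟨1, by omega⟩ with hi1
    have hi01 : i0 ≠ i1 := by simp [hi0, hi1, Fin.ext_iff]
    set φ : FreeGroup (Fin n) →* FreeGroup (Fin n) :=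
      (MonoidHom.snd _ _).comp (Ψ.comp (MonoidHom.inr _ _)) with hφdef
    have hφ : ∀ w, φ w = (Ψ (1, w)).2 := fun w => rfl
    -- images of the two generators do not commute
    have hnc : ¬ Commute (φ (FreeGroup.of i0)) (φ (FreeGroup.of i1)) := by
      intro hc
      have h1 : Ψ ((1, FreeGroup.of i0) * (1, FreeGroup.of i1)) =
          Ψ ((1, FreeGroup.of i1) * (1, FreeGroup.of i0)) := by
        rw [_root_.map_mul, _root_.map_mul]
        exact Prod.ext (mul_comm _ _) hc.eq
      have h2 := congrArg Prod.snd (hinj h1)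
      simp only [Prod.snd_mul, Prod.mk_mul_mk] at h2
      exact FreeGroup.of_mul_of_ne hi01 h2
    -- second component of Ψ vanishes on the free-abelian part
    have hsnd1 : ∀ z : Fin m → ℤ, (Ψ (Multiplicative.ofAdd z, 1)).2 = 1 := by
      intro z
      by_contra hc
      have hcm : ∀ w, Commute ((Ψ (Multiplicative.ofAdd z, 1)).2) (φ w) := by
        intro w
        have h3 : (Multiplicative.ofAdd z, (1 : FreeGroup (Fin n))) * (1, w) =
            (1, w) * (Multiplicative.ofAdd z, 1) := by
          rw [Prod.mk_mul_mk, Prod.mk_mul_mk, mul_comm, one_mul, mul_one, one_mul]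
        have h4 := congrArg Prod.snd (congrArg Ψ h3)
        simp only [_root_.map_mul, Prod.snd_mul] at h4
        exact h4
      exact hnc (freeGroup_commute_of_commute hc (hcm (FreeGroup.of i0)) (hcm (FreeGroup.of i1)))
    -- φ is injective
    have hφinj : Function.Injective φ := by
      refine (injective_iff_map_eq_one φ).mpr ?_
      intro w hw
      have hcomm : ∀ x : FreeGroup (Fin n), Commute w x := by
        intro x
        have h5 : Ψ ((1, w) * (1, x)) = Ψ ((1, x) * (1, w)) := by
          rw [_root_.map_mul, _root_.map_mul]
          refine Prod.ext (mul_comm _ _) ?_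
          show (Ψ (1, w)).2 * (Ψ (1, x)).2 = (Ψ (1, x)).2 * (Ψ (1, w)).2
          rw [← hφ, ← hφ, hw, one_mul, mul_one]
        have h6 := congrArg Prod.snd (hinj h5)
        simp only [Prod.snd_mul, Prod.mk_mul_mk] at h6
        exact h6
      obtain ⟨k, hk⟩ := FreeGroup.exists_zpow_of_commute_of (hcomm (FreeGroup.of i0))
      obtain ⟨l, hl⟩ := FreeGroup.exists_zpow_of_commute_of (hcomm (FreeGroup.of i1))
      have h7 : abVec w i0 = k := by
        rw [hk, abVec_zpow, abVec_of]
        simp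
      have h8 : abVec w i0 = 0 := by
        rw [hl, abVec_zpow, abVec_of]
        simp [Pi.single_eq_of_ne hi01]
      rw [hk, (h7.symm.trans h8 : k = 0), _root_.zpow_zero]
    -- φ u = v
    have he : (Multiplicative.ofAdd a, u) =
        (Multiplicative.ofAdd a, (1 : FreeGroup (Fin n))) * (1, u) := by
      rw [Prod.mk_mul_mk, mul_one, one_mul]
    have hφu : φ u = v := by
      have h9 := congrArg Prod.snd hval
      rw [he, _root_.map_mul] at h9
      simp only [Prod.snd_mul] at h9
      rw [hsnd1 a, one_mul] at h9
      exact h9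
    -- the matrix Q
    set F : (Fin m → ℤ) →+ (Fin m → ℤ) :=
      { toFun := fun z => Multiplicative.toAdd ((Ψ (Multiplicative.ofAdd z, 1)).1),
        map_zero' := by
          show Multiplicative.toAdd ((Ψ (Multiplicative.ofAdd (0 : Fin m → ℤ), 1)).1) = 0
          rw [show ((Multiplicative.ofAdd (0 : Fin m → ℤ)), (1 : FreeGroup (Fin n))) =
            (1 : GFab m n) from rfl, _root_.map_one]
          rfl
        map_add' := by
          intro x y
          show Multiplicative.toAdd ((Ψ (Multiplicative.ofAdd (x + y), 1)).1) =
            Multiplicative.toAdd ((Ψ (Multiplicative.ofAdd x, 1)).1) +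
              Multiplicative.toAdd ((Ψ (Multiplicative.ofAdd y, 1)).1)
          rw [show ((Multiplicative.ofAdd (x + y)), (1 : FreeGroup (Fin n))) =
            (Multiplicative.ofAdd x, 1) * (Multiplicative.ofAdd y, 1) from by
              rw [Prod.mk_mul_mk, mul_one]; rfl, _root_.map_mul]
          rfl } with hF
    set Q : Matrix (Fin m) (Fin m) ℤ := (LinearMap.toMatrix' F.toIntLinearMap)ᵀ with hQdef
    have hQspec : ∀ z, z ᵥ* Q = Multiplicative.toAdd ((Ψ (Multiplicative.ofAdd z, 1)).1) := by
      intro z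
      rw [hQdef, Matrix.vecMul_transpose, ← Matrix.toLin'_apply, Matrix.toLin'_toMatrix']
      rfl
    have hdet : Q.det ≠ 0 := by
      intro h0
      obtain ⟨z, hz, hz0⟩ := (Matrix.exists_vecMul_eq_zero_iff).mpr h0
      apply hz
      have hfst : (Ψ (Multiplicative.ofAdd z, 1)).1 = 1 := by
        have h10 : Multiplicative.toAdd ((Ψ (Multiplicative.ofAdd z, 1)).1) = 0 := by
          rw [← hQspec z, hz0]
        rw [← ofAdd_toAdd ((Ψ (Multiplicative.ofAdd z, 1)).1), h10]
        rfl
      have h11 : Ψ (Multiplicative.ofAdd z, 1) = 1 := Prod.ext hfst (hsnd1 z)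
      have h12 := hinj (h11.trans (_root_.map_one Ψ).symm)
      have h13 := congrArg Prod.fst h12
      exact congrArg Multiplicative.toAdd h13
    -- the matrix P
    set P : Matrix (Fin n) (Fin m) ℤ :=
      fun k => Multiplicative.toAdd ((Ψ (1, FreeGroup.of k)).1) with hPdef
    have hPspec : ∀ w, Multiplicative.toAdd ((Ψ (1, w)).1) = abVec w ᵥ* P := by
      have h₂mul : ∀ x y : FreeGroup (Fin n),
          Multiplicative.ofAdd (abVec (x * y) ᵥ* P) =
            Multiplicative.ofAdd (abVec x ᵥ* P) * Multiplicative.ofAdd (abVec y ᵥ* P) := by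
        intro x y
        rw [abVec_mul, Matrix.add_vecMul]
        rfl
      set h₁ : FreeGroup (Fin n) →* Multiplicative (Fin m → ℤ) :=
        (MonoidHom.fst _ _).comp (Ψ.comp (MonoidHom.inr _ _)) with hh₁
      set h₂ : FreeGroup (Fin n) →* Multiplicative (Fin m → ℤ) :=
        { toFun := fun w => Multiplicative.ofAdd (abVec w ᵥ* P),
          map_one' := by
            show Multiplicative.ofAdd (abVec (1 : FreeGroup (Fin n)) ᵥ* P) = 1
            rw [abVec_one, Matrix.zero_vecMul]
            rfl,
          map_mul' := h₂mul } with hh₂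
      have hext : h₁ = h₂ := by
        refine FreeGroup.ext_hom _ _ ?_
        intro k
        show (Ψ (1, FreeGroup.of k)).1 = Multiplicative.ofAdd (abVec (FreeGroup.of k) ᵥ* P)
        rw [abVec_of, Matrix.single_one_vecMul, hPdef]
        exact (ofAdd_toAdd _).symm
      intro w
      have h14 := congrArg Multiplicative.toAdd (DFunLike.congr_fun hext w)
      exact h14
    refine ⟨⟨φ, hφinj, hφu⟩, Q, P, hdet, ?_⟩
    have h15 := congrArg Prod.fst hval
    rw [he, _root_.map_mul] at h15
    simp only [Prod.fst_mul] at h15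
    have h16 := congrArg Multiplicative.toAdd h15
    rw [toAdd_mul] at h16
    rw [hQspec a, ← hPspec u]
    exact h16
  · rintro ⟨⟨φ, hφinj, hφu⟩, Q, P, hQ, hQP⟩
    refine ⟨MonoidHom.mk' (fun p : GFab m n =>
        ((Multiplicative.ofAdd (Multiplicative.toAdd p.1 ᵥ* Q + abVec p.2 ᵥ* P),
          φ p.2) : GFab m n)) ?_, ?_, ?_⟩
    · intro p q
      refine Prod.ext ?_ ?_
      · show Multiplicative.ofAdd (Multiplicative.toAdd (p.1 * q.1) ᵥ* Q + abVec (p.2 * q.2) ᵥ* P)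
          = _
        rw [toAdd_mul, abVec_mul, Matrix.add_vecMul, Matrix.add_vecMul]
        show Multiplicative.ofAdd _ =
          Multiplicative.ofAdd (Multiplicative.toAdd p.1 ᵥ* Q + abVec p.2 ᵥ* P) *
            Multiplicative.ofAdd (Multiplicative.toAdd q.1 ᵥ* Q + abVec q.2 ᵥ* P)
        rw [← ofAdd_add]
        congr 1
        abel
      · exact _root_.map_mul φ p.2 q.2
    · refine (injective_iff_map_eq_one _).mpr ?_
      intro p hp
      have h1 : φ p.2 = 1 := congrArg Prod.snd hp
      have h2 : Multiplicative.ofAdd (Multiplicative.toAdd p.1 ᵥ* Q + abVec p.2 ᵥ* P) = 1 :=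
        congrArg Prod.fst hp
      have hp2 : p.2 = 1 := hφinj (h1.trans (_root_.map_one φ).symm)
      have hp1 : Multiplicative.toAdd p.1 ᵥ* Q = 0 := by
        have h3 : Multiplicative.toAdd p.1 ᵥ* Q + abVec p.2 ᵥ* P = 0 := by
          have := congrArg Multiplicative.toAdd h2
          simpa using this
        rw [hp2, abVec_one, Matrix.zero_vecMul, add_zero] at h3
        exact h3
      have hp1' : Multiplicative.toAdd p.1 = 0 := by
        by_contra hzz
        exact hQ (Matrix.exists_vecMul_eq_zero_iff.mp ⟨Multiplicative.toAdd p.1, hzz, hp1⟩)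
      have : p.1 = 1 := by
        rw [← ofAdd_toAdd p.1, hp1']
        rfl
      exact Prod.ext this hp2
    · show (Multiplicative.ofAdd
        (Multiplicative.toAdd (Multiplicative.ofAdd a) ᵥ* Q + abVec u ᵥ* P), φ u) =
        (Multiplicative.ofAdd b, v)
      rw [toAdd_ofAdd, hQP, hφu]
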